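/- Bisimulation equivalence is a congruence with respect to the operators of ctACPps: for all closed ctACPps process terms p,q,p′,q′, every proposition φ, and every H⊆A, if p ↔ q and p′ ↔ q′ then p+p′ ↔ q+q′, p·p′ ↔ q·q′, φ:→p ↔ φ:→q, φ⌃p ↔ φ⌃q, p∥p′ ↔ q∥q′, p⌊⌊p′ ↔ q⌊⌊q′, p|p′ ↔ q|q′, and ∂_H(p) ↔ ∂_H(q). -/
import Mathlib


set_option autoImplicit true
set_option maxHeartbeats 1000000

/-- The three truth values of LP→⊥: true, false, both. -/
inductive V3 : Type
  | t
  | f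
  | b
  deriving DecidableEq

/-- Formulas of LP→⊥ over propositional variables of type `α`. -/
inductive Fml (α : Type) : Type
  | var : α → Fml α
  | bot : Fml α
  | neg : Fml α → Fml α
  | conj : Fml α → Fml α → Fml α
  | disj : Fml α → Fml α → Fml α
  | imp : Fml α → Fml α → Fml α

namespace Fml

/-- ⊤ abbreviates ¬⊥. -/
def top {α : Type} : Fml α := neg bot

/-- A↔B abbreviates (A→B)∧(B→A). -/
def iff' {α : Type} (A B : Fml α) : Fml α := conj (imp A B) (imp B A)

end Fml

/-- LP→⊥ truth table for negation. -/
def negT : V3 → V3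
  | .f => .t
  | .t => .f
  | .b => .b

/-- LP→⊥ truth table for conjunction. -/
def conjT : V3 → V3 → V3
  | .f, _ => .f
  | _, .f => .f
  | .t, .t => .t
  | _, _ => .b

/-- LP→⊥ truth table for disjunction. -/
def disjT : V3 → V3 → V3
  | .t, _ => .t
  | _, .t => .t
  | .f, .f => .f
  | _, _ => .b

/-- LP→⊥ truth table for implication. -/
def impT : V3 → V3 → V3
  | .f, _ => .t
  | _, y => y

/-- The LP→⊥ valuation determined by an assignment `σ` of truth values to variables. -/
def eval {α : Type} (σ : α → V3) : Fml α → V3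
  | .var x => σ x
  | .bot => .f
  | .neg A => negT (eval σ A)
  | .conj A B => conjT (eval σ A) (eval σ B)
  | .disj A B => disjT (eval σ A) (eval σ B)
  | .imp A B => impT (eval σ A) (eval σ B)

/-- Logical equivalence in LP→⊥: the same value under every valuation. -/
def FEquiv {α : Type} (A B : Fml α) : Prop := ∀ σ : α → V3, eval σ A = eval σ B

/-- `φ ∈ [⊥]`: `φ` is logically equivalent to ⊥. -/
def EqBot {α : Type} (φ : Fml α) : Prop := ∀ σ : α → V3, eval σ φ = V3.f

/-- Semantic consequence in LP→⊥ (designated values t and b). -/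
def SemCons {α : Type} (Γ : Set (Fml α)) (A : Fml α) : Prop :=
  ∀ σ : α → V3, (∀ C ∈ Γ, eval σ C ≠ V3.f) → eval σ A ≠ V3.f

/-- The Hilbert system of LP→⊥, with hypotheses `Γ`. -/
inductive Hilb {α : Type} (Γ : Set (Fml α)) : Fml α → Prop
  | hyp {A : Fml α} : A ∈ Γ → Hilb Γ A
  | mp {A B : Fml α} : Hilb Γ (A.imp B) → Hilb Γ A → Hilb Γ B
  | ax1 (A B : Fml α) : Hilb Γ (A.imp (B.imp A))
  | ax2 (A B C : Fml α) : Hilb Γ ((A.imp (B.imp C)).imp ((A.imp B).imp (A.imp C)))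
  | ax3 (A B : Fml α) : Hilb Γ (((A.imp B).imp A).imp A)
  | ax4 (A : Fml α) : Hilb Γ (Fml.bot.imp A)
  | ax5 (A B : Fml α) : Hilb Γ ((A.conj B).imp A)
  | ax6 (A B : Fml α) : Hilb Γ ((A.conj B).imp B)
  | ax7 (A B : Fml α) : Hilb Γ (A.imp (B.imp (A.conj B)))
  | ax8 (A B : Fml α) : Hilb Γ (A.imp (A.disj B))
  | ax9 (A B : Fml α) : Hilb Γ (B.imp (A.disj B))
  | ax10 (A B C : Fml α) : Hilb Γ ((A.imp C).imp ((B.imp C).imp ((A.disj B).imp C)))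
  | ax11 (A : Fml α) : Hilb Γ (Fml.iff' A.neg.neg A)
  | ax12 (A B : Fml α) : Hilb Γ (Fml.iff' (A.imp B).neg (A.conj B.neg))
  | ax13 (A B : Fml α) : Hilb Γ (Fml.iff' (A.conj B).neg (A.neg.disj B.neg))
  | ax14 (A B : Fml α) : Hilb Γ (Fml.iff' (A.disj B).neg (A.neg.conj B.neg))
  | ax15 (A : Fml α) : Hilb Γ (A.disj A.neg)

/-- The internalization (A↔B)∧(¬A↔¬B) of logical equivalence. -/
def InternEq {α : Type} (φ ψ : Fml α) : Fml α :=
  (Fml.iff' φ ψ).conj (Fml.iff' φ.neg ψ.neg)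

/-- Derivable equality of propositions: the least congruence containing the
instances of axiom IMP (φ = ψ whenever ⊢ (φ↔ψ)∧(¬φ↔¬ψ)). -/
inductive PropEq {α : Type} : Fml α → Fml α → Prop
  | imp {φ ψ} : Hilb (∅ : Set (Fml α)) (InternEq φ ψ) → PropEq φ ψ
  | refl (φ) : PropEq φ φ
  | symm {φ ψ} : PropEq φ ψ → PropEq ψ φ
  | trans {φ ψ χ} : PropEq φ ψ → PropEq ψ χ → PropEq φ χ
  | negC {φ ψ} : PropEq φ ψ → PropEq φ.neg ψ.neg
  | conjC {φ ψ φ' ψ'} : PropEq φ ψ → PropEq φ' ψ' → PropEq (φ.conj φ') (ψ.conj ψ')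
  | disjC {φ ψ φ' ψ'} : PropEq φ ψ → PropEq φ' ψ' → PropEq (φ.disj φ') (ψ.disj ψ')
  | impC {φ ψ φ' ψ'} : PropEq φ ψ → PropEq φ' ψ' → PropEq (φ.imp φ') (ψ.imp ψ')

/-- Closed ctACPps process terms (δ is `delta`, ⊗ is `nex`, `gc`/`se` are the
guarded command and signal emission, `par` is ∥, `lm` is left merge ⌊⌊,
`cm` is communication merge |, `encap H` is ∂_H). -/
inductive APT (α Act : Type) : Type
  | act : Act → APT α Act
  | delta : APT α Act
  | nex : APT α Act
  | alt : APT α Act → APT α Act → APT α Act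
  | seq : APT α Act → APT α Act → APT α Act
  | gc : Fml α → APT α Act → APT α Act
  | se : Fml α → APT α Act → APT α Act
  | par : APT α Act → APT α Act → APT α Act
  | lm : APT α Act → APT α Act → APT α Act
  | cm : APT α Act → APT α Act → APT α Act
  | encap : Set Act → APT α Act → APT α Act

/-- The constant corresponding to an element of A ∪ {δ} (encoded as `Option Act`,
with `none` standing for δ). -/
def actd {α Act : Type} : Option Act → APT α Act
  | some a => .act a
  | none => .delta

section
variable {α Act : Type}

/-- Derivable equality from the axioms of ctACPps (γ is the communication
function on A ∪ {δ}; `a | b` in the axioms stands for γ(a,b), which is the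
content of axiom `CF`): the least congruence satisfying A1-A7, NE1-NE3,
GC1-GC7, SE1-SE8, IMP, CM1-CM9 (with CM2S, CM3S), C1-C3, D1-D4,
GC8S-GC11 and SE9-SE12. -/
inductive ADeriv (γ : Option Act → Option Act → Option Act) :
    APT α Act → APT α Act → Prop
  | refl (p : APT α Act) : ADeriv γ p p
  | symm {p q} : ADeriv γ p q → ADeriv γ q p
  | trans {p q r} : ADeriv γ p q → ADeriv γ q r → ADeriv γ p r
  | altC {p q p' q'} : ADeriv γ p q → ADeriv γ p' q' → ADeriv γ (.alt p p') (.alt q q')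
  | seqC {p q p' q'} : ADeriv γ p q → ADeriv γ p' q' → ADeriv γ (.seq p p') (.seq q q')
  | gcC {φ ψ p q} : PropEq φ ψ → ADeriv γ p q → ADeriv γ (.gc φ p) (.gc ψ q)
  | seC {φ ψ p q} : PropEq φ ψ → ADeriv γ p q → ADeriv γ (.se φ p) (.se ψ q)
  | parC {p q p' q'} : ADeriv γ p q → ADeriv γ p' q' → ADeriv γ (.par p p') (.par q q')
  | lmC {p q p' q'} : ADeriv γ p q → ADeriv γ p' q' → ADeriv γ (.lm p p') (.lm q q')
  | cmC {p q p' q'} : ADeriv γ p q → ADeriv γ p' q' → ADeriv γ (.cm p p') (.cm q q')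
  | encapC (H : Set Act) {p q} : ADeriv γ p q → ADeriv γ (.encap H p) (.encap H q)
  | A1 (x y : APT α Act) : ADeriv γ (.alt x y) (.alt y x)
  | A2 (x y z : APT α Act) : ADeriv γ (.alt (.alt x y) z) (.alt x (.alt y z))
  | A3 (x : APT α Act) : ADeriv γ (.alt x x) x
  | A4 (x y z : APT α Act) : ADeriv γ (.seq (.alt x y) z) (.alt (.seq x z) (.seq y z))
  | A5 (x y z : APT α Act) : ADeriv γ (.seq (.seq x y) z) (.seq x (.seq y z))
  | A6 (x : APT α Act) : ADeriv γ (.alt x .delta) x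
  | A7 (x : APT α Act) : ADeriv γ (.seq .delta x) .delta
  | NE1 (x : APT α Act) : ADeriv γ (.alt x .nex) .nex
  | NE2 (x : APT α Act) : ADeriv γ (.seq .nex x) .nex
  | NE3 (a : Option Act) : ADeriv γ (.seq (actd a) .nex) (.delta : APT α Act)
  | GC1 (x : APT α Act) : ADeriv γ (.gc Fml.top x) x
  | GC2 (x : APT α Act) : ADeriv γ (.gc .bot x) .delta
  | GC3 (φ : Fml α) : ADeriv γ (.gc φ .delta) (.delta : APT α Act)
  | GC4 (φ : Fml α) (x y : APT α Act) :
      ADeriv γ (.gc φ (.alt x y)) (.alt (.gc φ x) (.gc φ y))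
  | GC5 (φ : Fml α) (x y : APT α Act) : ADeriv γ (.gc φ (.seq x y)) (.seq (.gc φ x) y)
  | GC6 (φ ψ : Fml α) (x : APT α Act) : ADeriv γ (.gc φ (.gc ψ x)) (.gc (φ.conj ψ) x)
  | GC7 (φ ψ : Fml α) (x : APT α Act) :
      ADeriv γ (.gc (φ.disj ψ) x) (.alt (.gc φ x) (.gc ψ x))
  | SE1 (x : APT α Act) : ADeriv γ (.se Fml.top x) x
  | SE2 (x : APT α Act) : ADeriv γ (.se .bot x) .nex
  | SE3 (φ : Fml α) : ADeriv γ (.se φ .nex) (.nex : APT α Act)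
  | SE4 (φ : Fml α) (x y : APT α Act) : ADeriv γ (.alt (.se φ x) y) (.se φ (.alt x y))
  | SE5 (φ : Fml α) (x y : APT α Act) : ADeriv γ (.seq (.se φ x) y) (.se φ (.seq x y))
  | SE6 (φ ψ : Fml α) (x : APT α Act) : ADeriv γ (.se φ (.se ψ x)) (.se (φ.conj ψ) x)
  | SE7 (φ : Fml α) (x : APT α Act) : ADeriv γ (.se φ (.gc φ x)) (.se φ x)
  | SE8 (φ ψ : Fml α) (x : APT α Act) :
      ADeriv γ (.gc φ (.se ψ x)) (.se (φ.imp ψ) (.gc φ x))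
  | CM1 (x y : APT α Act) :
      ADeriv γ (.par x y) (.alt (.alt (.lm x y) (.lm y x)) (.cm x y))
  | CM2S (a : Option Act) (x : APT α Act) :
      ADeriv γ (.lm (actd a) x) (.alt (.seq (actd a) x) (.encap Set.univ x))
  | CM3S (a : Option Act) (x y : APT α Act) :
      ADeriv γ (.lm (.seq (actd a) x) y)
        (.alt (.seq (actd a) (.par x y)) (.encap Set.univ y))
  | CM4 (x y z : APT α Act) : ADeriv γ (.lm (.alt x y) z) (.alt (.lm x z) (.lm y z))
  | CM5 (a b : Option Act) (x : APT α Act) :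
      ADeriv γ (.cm (.seq (actd a) x) (actd b)) (.seq (actd (γ a b)) x)
  | CM6 (a b : Option Act) (x : APT α Act) :
      ADeriv γ (.cm (actd a) (.seq (actd b) x)) (.seq (actd (γ a b)) x)
  | CM7 (a b : Option Act) (x y : APT α Act) :
      ADeriv γ (.cm (.seq (actd a) x) (.seq (actd b) y)) (.seq (actd (γ a b)) (.par x y))
  | CM8 (x y z : APT α Act) : ADeriv γ (.cm (.alt x y) z) (.alt (.cm x z) (.cm y z))
  | CM9 (x y z : APT α Act) : ADeriv γ (.cm x (.alt y z)) (.alt (.cm x y) (.cm x z))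
  | CF (a b : Option Act) : ADeriv γ (.cm (actd a) (actd b)) (actd (γ a b) : APT α Act)
  | C1 (a b : Option Act) :
      ADeriv γ (.cm (actd a) (actd b)) (.cm (actd b) (actd a) : APT α Act)
  | C2 (a b c : Option Act) :
      ADeriv γ (.cm (.cm (actd a) (actd b)) (actd c))
        (.cm (actd a) (.cm (actd b) (actd c)) : APT α Act)
  | C3 (a : Option Act) : ADeriv γ (.cm .delta (actd a)) (.delta : APT α Act)
  | D1 (H : Set Act) (a : Act) : a ∉ H → ADeriv γ (.encap H (.act a)) (.act a)
  | D1d (H : Set Act) : ADeriv γ (.encap H (.delta : APT α Act)) .delta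
  | D2 (H : Set Act) (a : Act) : a ∈ H → ADeriv γ (.encap H (.act a)) .delta
  | D3 (H : Set Act) (x y : APT α Act) :
      ADeriv γ (.encap H (.alt x y)) (.alt (.encap H x) (.encap H y))
  | D4 (H : Set Act) (x y : APT α Act) :
      ADeriv γ (.encap H (.seq x y)) (.seq (.encap H x) (.encap H y))
  | GC8S (φ : Fml α) (x y : APT α Act) :
      ADeriv γ (.lm (.gc φ x) y) (.alt (.gc φ (.lm x y)) (.encap Set.univ y))
  | GC9S (φ : Fml α) (x y : APT α Act) :
      ADeriv γ (.cm (.gc φ x) y) (.alt (.gc φ (.cm x y)) (.encap Set.univ y))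
  | GC10S (φ : Fml α) (x y : APT α Act) :
      ADeriv γ (.cm x (.gc φ y)) (.alt (.gc φ (.cm x y)) (.encap Set.univ x))
  | GC11 (H : Set Act) (φ : Fml α) (x : APT α Act) :
      ADeriv γ (.encap H (.gc φ x)) (.gc φ (.encap H x))
  | SE9 (φ : Fml α) (x y : APT α Act) : ADeriv γ (.lm (.se φ x) y) (.se φ (.lm x y))
  | SE10 (φ : Fml α) (x y : APT α Act) : ADeriv γ (.cm (.se φ x) y) (.se φ (.cm x y))
  | SE11 (φ : Fml α) (x y : APT α Act) : ADeriv γ (.cm x (.se φ y)) (.se φ (.cm x y))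
  | SE12 (H : Set Act) (φ : Fml α) (x : APT α Act) :
      ADeriv γ (.encap H (.se φ x)) (.se φ (.encap H x))

/-- Basic terms (basic terms of ctBPAps, within the ctACPps syntax). -/
inductive ABasic : APT α Act → Prop
  | nex : ABasic (.nex : APT α Act)
  | emiDelta {φ : Fml α} : ¬ EqBot φ → ABasic (.se φ .delta)
  | gcAct {φ : Fml α} (a : Act) : ¬ EqBot φ → ABasic (.gc φ (.act a))
  | gcSeq {φ : Fml α} (a : Act) {p : APT α Act} :
      ¬ EqBot φ → ABasic p → ABasic (.gc φ (.seq (.act a) p))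
  | alt {p q : APT α Act} : ABasic p → ABasic q → ABasic (.alt p q)

/-- The signal (root signal) emitted by a process term. -/
def sigA : APT α Act → Fml α
  | .act _ => Fml.top
  | .delta => Fml.top
  | .nex => .bot
  | .alt p q => (sigA p).conj (sigA q)
  | .seq p _ => sigA p
  | .gc φ p => φ.imp (sigA p)
  | .se φ p => φ.conj (sigA p)
  | .par p q => (sigA p).conj (sigA q)
  | .lm p q => (sigA p).conj (sigA q)
  | .cm p q => (sigA p).conj (sigA q)
  | .encap _ p => sigA p

/-- The structural operational semantics of ctACPps: `ATr γ p φ a (some q)` is the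
action step p –φ,a→ q and `ATr γ p φ a none` is the action termination p –φ,a→ √. -/
inductive ATr (γ : Option Act → Option Act → Option Act) :
    APT α Act → Fml α → Act → Option (APT α Act) → Prop
  | act (a : Act) : ATr γ (.act a) Fml.top a none
  | altL {x φ a o} (y : APT α Act) :
      ATr γ x φ a o → ¬ EqBot (sigA (APT.alt x y)) → ATr γ (.alt x y) φ a o
  | altR {y φ a o} (x : APT α Act) :
      ATr γ y φ a o → ¬ EqBot (sigA (APT.alt x y)) → ATr γ (.alt x y) φ a o
  | seqT {x φ a} (y : APT α Act) :
      ATr γ x φ a none → ¬ EqBot (sigA y) → ATr γ (.seq x y) φ a (some y)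
  | seqS {x φ a x'} (y : APT α Act) :
      ATr γ x φ a (some x') → ATr γ (.seq x y) φ a (some (.seq x' y))
  | gcR {x φ a o} (ψ : Fml α) :
      ATr γ x φ a o → ¬ EqBot (φ.conj ψ) → ATr γ (.gc ψ x) (φ.conj ψ) a o
  | seR {x φ a o} (ψ : Fml α) :
      ATr γ x φ a o → ¬ EqBot (sigA (APT.se ψ x)) → ATr γ (.se ψ x) φ a o
  | parTL {x φ a} (y : APT α Act) :
      ATr γ x φ a none → ¬ EqBot (sigA (APT.par x y)) → ¬ EqBot (sigA y) →
      ATr γ (.par x y) φ a (some y)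
  | parTR (x : APT α Act) {y φ a} :
      ATr γ y φ a none → ¬ EqBot (sigA (APT.par x y)) → ¬ EqBot (sigA x) →
      ATr γ (.par x y) φ a (some x)
  | parSL {x φ a x'} (y : APT α Act) :
      ATr γ x φ a (some x') → ¬ EqBot (sigA (APT.par x y)) →
      ¬ EqBot (sigA (APT.par x' y)) → ATr γ (.par x y) φ a (some (.par x' y))
  | parSR (x : APT α Act) {y φ a y'} :
      ATr γ y φ a (some y') → ¬ EqBot (sigA (APT.par x y)) →
      ¬ EqBot (sigA (APT.par x y')) → ATr γ (.par x y) φ a (some (.par x y'))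
  | parCTT {x y : APT α Act} {φ ψ a b c} :
      ATr γ x φ a none → ATr γ y ψ b none → γ (some a) (some b) = some c →
      ¬ EqBot (φ.conj ψ) → ¬ EqBot (sigA (APT.par x y)) →
      ATr γ (.par x y) (φ.conj ψ) c none
  | parCTS {x y : APT α Act} {φ ψ a b c y'} :
      ATr γ x φ a none → ATr γ y ψ b (some y') → γ (some a) (some b) = some c →
      ¬ EqBot (φ.conj ψ) → ¬ EqBot (sigA (APT.par x y)) →
      ATr γ (.par x y) (φ.conj ψ) c (some y')
  | parCST {x y : APT α Act} {φ ψ a b c x'} :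
      ATr γ x φ a (some x') → ATr γ y ψ b none → γ (some a) (some b) = some c →
      ¬ EqBot (φ.conj ψ) → ¬ EqBot (sigA (APT.par x y)) →
      ATr γ (.par x y) (φ.conj ψ) c (some x')
  | parCSS {x y : APT α Act} {φ ψ a b c x' y'} :
      ATr γ x φ a (some x') → ATr γ y ψ b (some y') → γ (some a) (some b) = some c →
      ¬ EqBot (φ.conj ψ) → ¬ EqBot (sigA (APT.par x y)) →
      ¬ EqBot (sigA (APT.par x' y')) →
      ATr γ (.par x y) (φ.conj ψ) c (some (.par x' y'))
  | lmT {x φ a} (y : APT α Act) :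
      ATr γ x φ a none → ¬ EqBot (sigA (APT.lm x y)) → ¬ EqBot (sigA y) →
      ATr γ (.lm x y) φ a (some y)
  | lmS {x φ a x'} (y : APT α Act) :
      ATr γ x φ a (some x') → ¬ EqBot (sigA (APT.lm x y)) →
      ¬ EqBot (sigA (APT.par x' y)) → ATr γ (.lm x y) φ a (some (.par x' y))
  | cmTT {x y : APT α Act} {φ ψ a b c} :
      ATr γ x φ a none → ATr γ y ψ b none → γ (some a) (some b) = some c →
      ¬ EqBot (φ.conj ψ) → ¬ EqBot (sigA (APT.cm x y)) →
      ATr γ (.cm x y) (φ.conj ψ) c none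
  | cmTS {x y : APT α Act} {φ ψ a b c y'} :
      ATr γ x φ a none → ATr γ y ψ b (some y') → γ (some a) (some b) = some c →
      ¬ EqBot (φ.conj ψ) → ¬ EqBot (sigA (APT.cm x y)) →
      ATr γ (.cm x y) (φ.conj ψ) c (some y')
  | cmST {x y : APT α Act} {φ ψ a b c x'} :
      ATr γ x φ a (some x') → ATr γ y ψ b none → γ (some a) (some b) = some c →
      ¬ EqBot (φ.conj ψ) → ¬ EqBot (sigA (APT.cm x y)) →
      ATr γ (.cm x y) (φ.conj ψ) c (some x')
  | cmSS {x y : APT α Act} {φ ψ a b c x' y'} :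
      ATr γ x φ a (some x') → ATr γ y ψ b (some y') → γ (some a) (some b) = some c →
      ¬ EqBot (φ.conj ψ) → ¬ EqBot (sigA (APT.cm x y)) →
      ¬ EqBot (sigA (APT.par x' y')) →
      ATr γ (.cm x y) (φ.conj ψ) c (some (.par x' y'))
  | encapR {x φ a o} (H : Set Act) :
      ATr γ x φ a o → a ∉ H → ATr γ (.encap H x) φ a (Option.map (APT.encap H) o)

/-- Lift a relation on process terms to their optional (√-extended) targets. -/
def AOptR (R : APT α Act → APT α Act → Prop) :
    Option (APT α Act) → Option (APT α Act) → Prop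
  | none, none => True
  | some p, some q => R p q
  | _, _ => False

/-- The (one-directional) simulation conditions of a splitting bisimulation. -/
def ASim (γ : Option Act → Option Act → Option Act)
    (R : APT α Act → APT α Act → Prop) (p q : APT α Act) : Prop :=
  (∀ φ a o, ATr γ p φ a o →
    ∀ σ : α → V3, eval σ (sigA p) ≠ V3.f → eval σ φ ≠ V3.f →
      ∃ ψ o', eval σ ψ = eval σ φ ∧ ATr γ q ψ a o' ∧ AOptR R o o') ∧
  FEquiv (sigA p) (sigA q)

/-- `R` is a bisimulation. -/
def AIsBisim (γ : Option Act → Option Act → Option Act)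
    (R : APT α Act → APT α Act → Prop) : Prop :=
  ∀ p q, R p q → ASim γ R p q ∧ ASim γ (fun u v => R v u) q p

/-- Bisimulation equivalence. -/
def ABisim (γ : Option Act → Option Act → Option Act) (p q : APT α Act) : Prop :=
  ∃ R, AIsBisim γ R ∧ R p q

end

section Congruence
variable {α Act : Type} {γ : Option Act → Option Act → Option Act}

lemma conjT_ne_f {x y : V3} : conjT x y ≠ .f ↔ (x ≠ .f ∧ y ≠ .f) := by
  cases x <;> cases y <;> simp [conjT]

lemma eval_conj (σ : α → V3) (A B : Fml α) :
    eval σ (A.conj B) = conjT (eval σ A) (eval σ B) := rfl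

lemma eval_imp (σ : α → V3) (A B : Fml α) :
    eval σ (A.imp B) = impT (eval σ A) (eval σ B) := rfl

lemma eval_conj_ne {σ : α → V3} {A B : Fml α} :
    eval σ (A.conj B) ≠ V3.f ↔ (eval σ A ≠ V3.f ∧ eval σ B ≠ V3.f) := by
  rw [eval_conj]; exact conjT_ne_f

lemma eval_imp_of_ne {σ : α → V3} {A B : Fml α} (h : eval σ A ≠ V3.f) :
    eval σ (A.imp B) = eval σ B := by
  rw [eval_imp]; cases hA : eval σ A
  · rfl
  · exact absurd hA h
  · rfl

lemma notEqBot_of {σ : α → V3} {A : Fml α} (h : eval σ A ≠ V3.f) : ¬ EqBot A :=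
  fun hb => h (hb σ)

lemma notEqBot_trans {A B : Fml α} (hF : FEquiv A B) (h : ¬ EqBot A) : ¬ EqBot B :=
  fun hb => h (fun σ => (hF σ).trans (hb σ))

lemma FEquiv.conj2 {A B C D : Fml α} (h1 : FEquiv A B) (h2 : FEquiv C D) :
    FEquiv (A.conj C) (B.conj D) := fun σ => by
  rw [eval_conj, eval_conj, h1 σ, h2 σ]

lemma aoptr_none {R : APT α Act → APT α Act → Prop} {o : Option (APT α Act)}
    (h : AOptR R none o) : o = none := by
  cases o with
  | none => rfl
  | some _ => exact h.elim

lemma aoptr_some {R : APT α Act → APT α Act → Prop} {x : APT α Act} {o : Option (APT α Act)}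
    (h : AOptR R (some x) o) : ∃ y, o = some y ∧ R x y := by
  cases o with
  | none => exact h.elim
  | some y => exact ⟨y, rfl, h⟩

lemma AOptR_mono {R S : APT α Act → APT α Act → Prop} (h : ∀ a b, R a b → S a b) :
    ∀ o o', AOptR R o o' → AOptR S o o' := by
  intro o o' ho
  cases o with
  | none => cases o' with
    | none => trivial
    | some _ => exact ho.elim
  | some x => cases o' with
    | none => exact ho.elim
    | some y => exact h _ _ ho

lemma ASim_mono {R S : APT α Act → APT α Act → Prop} (hRS : ∀ a b, R a b → S a b)
    {p q : APT α Act} (h : ASim γ R p q) : ASim γ S p q := by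
  refine ⟨fun φ a o ht σ hσ hφ => ?_, h.2⟩
  obtain ⟨ψ, o', he, ht', ho⟩ := h.1 φ a o ht σ hσ hφ
  exact ⟨ψ, o', he, ht', AOptR_mono hRS _ _ ho⟩

/-- One-step congruence closure of a relation. -/
inductive Cl (R : APT α Act → APT α Act → Prop) : APT α Act → APT α Act → Prop
  | base {u v} : R u v → Cl R u v
  | alt {a b c d} : R a b → R c d → Cl R (.alt a c) (.alt b d)
  | seq {a b c d} : R a b → R c d → Cl R (.seq a c) (.seq b d)
  | gc (ψ : Fml α) {a b} : R a b → Cl R (.gc ψ a) (.gc ψ b)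
  | se (ψ : Fml α) {a b} : R a b → Cl R (.se ψ a) (.se ψ b)
  | par {a b c d} : R a b → R c d → Cl R (.par a c) (.par b d)
  | lm {a b c d} : R a b → R c d → Cl R (.lm a c) (.lm b d)
  | cm {a b c d} : R a b → R c d → Cl R (.cm a c) (.cm b d)
  | encap (K : Set Act) {a b} : R a b → Cl R (.encap K a) (.encap K b)

lemma Cl_swap {R : APT α Act → APT α Act → Prop} {u v : APT α Act}
    (h : Cl (fun a b => R b a) u v) : Cl R v u := by
  cases h with
  | base h => exact .base h
  | alt h1 h2 => exact .alt h1 h2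
  | seq h1 h2 => exact .seq h1 h2
  | gc ψ h1 => exact .gc ψ h1
  | se ψ h1 => exact .se ψ h1
  | par h1 h2 => exact .par h1 h2
  | lm h1 h2 => exact .lm h1 h2
  | cm h1 h2 => exact .cm h1 h2
  | encap K h1 => exact .encap K h1

lemma Cl_sig {R : APT α Act → APT α Act → Prop}
    (hsg : ∀ u v, R u v → FEquiv (sigA u) (sigA v)) {u v : APT α Act}
    (h : Cl R u v) : FEquiv (sigA u) (sigA v) := by
  cases h with
  | base h => exact hsg _ _ h
  | alt h1 h2 => exact FEquiv.conj2 (hsg _ _ h1) (hsg _ _ h2)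
  | seq h1 h2 => intro σ; simp only [sigA]; exact hsg _ _ h1 σ
  | gc ψ h1 => intro σ; simp only [sigA, eval_imp, hsg _ _ h1 σ]
  | se ψ h1 => intro σ; simp only [sigA, eval_conj, hsg _ _ h1 σ]
  | par h1 h2 => exact FEquiv.conj2 (hsg _ _ h1) (hsg _ _ h2)
  | lm h1 h2 => exact FEquiv.conj2 (hsg _ _ h1) (hsg _ _ h2)
  | cm h1 h2 => exact FEquiv.conj2 (hsg _ _ h1) (hsg _ _ h2)
  | encap K h1 => intro σ; simp only [sigA]; exact hsg _ _ h1 σ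

end Congruence

section Forward
variable {α Act : Type} {γ : Option Act → Option Act → Option Act}

lemma AOptR_map_encap {R : APT α Act → APT α Act → Prop} (K : Set Act)
    {o o' : Option (APT α Act)} (h : AOptR R o o') :
    AOptR (Cl R) (o.map (APT.encap K)) (o'.map (APT.encap K)) := by
  cases o with
  | none => cases o' with
    | none => trivial
    | some _ => exact h.elim
  | some x => cases o' with
    | none => exact h.elim
    | some y => exact Cl.encap K h

theorem Cl_forward {R : APT α Act → APT α Act → Prop}
    (hR : ∀ u v, R u v → ASim γ R u v) :
    ∀ u v, Cl R u v → ASim γ (Cl R) u v := by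
  have hsg : ∀ u v, R u v → FEquiv (sigA u) (sigA v) := fun u v h => (hR u v h).2
  have hb : ∀ (a b : APT α Act), R a b → Cl R a b := fun _ _ h => Cl.base h
  intro u v hc
  refine ⟨?_, Cl_sig hsg hc⟩
  intro φ a o htr σ hσ hφ
  cases hc with
  | base h =>
    obtain ⟨ψ, o', he, ht', ho⟩ := (hR _ _ h).1 φ a o htr σ hσ hφ
    exact ⟨ψ, o', he, ht', AOptR_mono hb _ _ ho⟩
  | @alt x1 y1 x2 y2 h1 h2 =>
    simp only [sigA] at hσ
    obtain ⟨hs1, hs2⟩ := eval_conj_ne.mp hσ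
    have hne : ¬ EqBot (sigA (APT.alt y1 y2)) := notEqBot_of (σ := σ) (by
      simp only [sigA]
      exact eval_conj_ne.mpr ⟨by rw [← hsg _ _ h1 σ]; exact hs1,
        by rw [← hsg _ _ h2 σ]; exact hs2⟩)
    cases htr with
    | altL _ ht _ =>
      obtain ⟨ψ, o', he, ht', ho⟩ := (hR _ _ h1).1 _ _ _ ht σ hs1 hφ
      exact ⟨ψ, o', he, ATr.altL _ ht' hne, AOptR_mono hb _ _ ho⟩
    | altR _ ht _ =>
      obtain ⟨ψ, o', he, ht', ho⟩ := (hR _ _ h2).1 _ _ _ ht σ hs2 hφ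
      exact ⟨ψ, o', he, ATr.altR _ ht' hne, AOptR_mono hb _ _ ho⟩
  | @seq x1 y1 x2 y2 h1 h2 =>
    simp only [sigA] at hσ
    cases htr with
    | seqT _ ht hn =>
      obtain ⟨ψ, o', he, ht', ho⟩ := (hR _ _ h1).1 _ _ _ ht σ hσ hφ
      cases aoptr_none ho
      exact ⟨ψ, some y2, he, ATr.seqT y2 ht' (notEqBot_trans (hsg _ _ h2) hn),
        Cl.base h2⟩
    | seqS _ ht =>
      obtain ⟨ψ, o', he, ht', ho⟩ := (hR _ _ h1).1 _ _ _ ht σ hσ hφ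
      obtain ⟨y1', rfl, hr⟩ := aoptr_some ho
      exact ⟨ψ, some (.seq y1' y2), he, ATr.seqS y2 ht', Cl.seq hr h2⟩
  | @gc ψg x1 y1 h1 =>
    cases htr with
    | gcR _ ht hn =>
      obtain ⟨hφ1, hφ2⟩ := eval_conj_ne.mp hφ
      simp only [sigA] at hσ
      rw [eval_imp_of_ne hφ2] at hσ
      obtain ⟨χ, o', he, ht', ho⟩ := (hR _ _ h1).1 _ _ _ ht σ hσ hφ1
      refine ⟨χ.conj ψg, o', ?_, ATr.gcR ψg ht' ?_, AOptR_mono hb _ _ ho⟩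
      · rw [eval_conj, eval_conj, he]
      · exact notEqBot_of (σ := σ) (by rw [eval_conj, he, ← eval_conj]; exact hφ)
  | @se ψg x1 y1 h1 =>
    simp only [sigA] at hσ
    obtain ⟨hs0, hs1⟩ := eval_conj_ne.mp hσ
    cases htr with
    | seR _ ht hn =>
      obtain ⟨χ, o', he, ht', ho⟩ := (hR _ _ h1).1 _ _ _ ht σ hs1 hφ
      refine ⟨χ, o', he, ATr.seR ψg ht' ?_, AOptR_mono hb _ _ ho⟩
      exact notEqBot_of (σ := σ) (by
        simp only [sigA]
        exact eval_conj_ne.mpr ⟨hs0, by rw [← hsg _ _ h1 σ]; exact hs1⟩)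
  | @par x1 y1 x2 y2 h1 h2 =>
    simp only [sigA] at hσ
    obtain ⟨hs1, hs2⟩ := eval_conj_ne.mp hσ
    have hq1 := hsg _ _ h1
    have hq2 := hsg _ _ h2
    have hne : ¬ EqBot (sigA (APT.par y1 y2)) := notEqBot_of (σ := σ) (by
      simp only [sigA]
      exact eval_conj_ne.mpr ⟨by rw [← hq1 σ]; exact hs1, by rw [← hq2 σ]; exact hs2⟩)
    cases htr with
    | parTL _ ht _ hn2 =>
      obtain ⟨ψ, o', he, ht', ho⟩ := (hR _ _ h1).1 _ _ _ ht σ hs1 hφ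
      cases aoptr_none ho
      exact ⟨ψ, some y2, he, ATr.parTL y2 ht' hne (notEqBot_trans hq2 hn2), Cl.base h2⟩
    | parTR _ ht _ hn1 =>
      obtain ⟨ψ, o', he, ht', ho⟩ := (hR _ _ h2).1 _ _ _ ht σ hs2 hφ
      cases aoptr_none ho
      exact ⟨ψ, some y1, he, ATr.parTR y1 ht' hne (notEqBot_trans hq1 hn1), Cl.base h1⟩
    | parSL _ ht _ hn =>
      obtain ⟨ψ, o', he, ht', ho⟩ := (hR _ _ h1).1 _ _ _ ht σ hs1 hφ
      obtain ⟨y1', rfl, hr⟩ := aoptr_some ho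
      exact ⟨ψ, some (.par y1' y2), he,
        ATr.parSL y2 ht' hne (notEqBot_trans (FEquiv.conj2 (hsg _ _ hr) hq2) hn),
        Cl.par hr h2⟩
    | parSR _ ht _ hn =>
      obtain ⟨ψ, o', he, ht', ho⟩ := (hR _ _ h2).1 _ _ _ ht σ hs2 hφ
      obtain ⟨y2', rfl, hr⟩ := aoptr_some ho
      exact ⟨ψ, some (.par y1 y2'), he,
        ATr.parSR y1 ht' hne (notEqBot_trans (FEquiv.conj2 hq1 (hsg _ _ hr)) hn),
        Cl.par h1 hr⟩
    | parCTT ht1 ht2 hcm hnp _ =>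
      obtain ⟨hφ1, hφ2⟩ := eval_conj_ne.mp hφ
      obtain ⟨ψ1, o1, he1, ht1', ho1⟩ := (hR _ _ h1).1 _ _ _ ht1 σ hs1 hφ1
      obtain ⟨ψ2, o2, he2, ht2', ho2⟩ := (hR _ _ h2).1 _ _ _ ht2 σ hs2 hφ2
      cases aoptr_none ho1
      cases aoptr_none ho2
      refine ⟨ψ1.conj ψ2, none, ?_, ATr.parCTT ht1' ht2' hcm ?_ hne, trivial⟩
      · rw [eval_conj, eval_conj, he1, he2]
      · exact notEqBot_of (σ := σ) (by rw [eval_conj, he1, he2, ← eval_conj]; exact hφ)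
    | parCTS ht1 ht2 hcm hnp _ =>
      obtain ⟨hφ1, hφ2⟩ := eval_conj_ne.mp hφ
      obtain ⟨ψ1, o1, he1, ht1', ho1⟩ := (hR _ _ h1).1 _ _ _ ht1 σ hs1 hφ1
      obtain ⟨ψ2, o2, he2, ht2', ho2⟩ := (hR _ _ h2).1 _ _ _ ht2 σ hs2 hφ2
      cases aoptr_none ho1
      obtain ⟨y2', rfl, hr⟩ := aoptr_some ho2
      refine ⟨ψ1.conj ψ2, some y2', ?_, ATr.parCTS ht1' ht2' hcm ?_ hne, Cl.base hr⟩
      · rw [eval_conj, eval_conj, he1, he2]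
      · exact notEqBot_of (σ := σ) (by rw [eval_conj, he1, he2, ← eval_conj]; exact hφ)
    | parCST ht1 ht2 hcm hnp _ =>
      obtain ⟨hφ1, hφ2⟩ := eval_conj_ne.mp hφ
      obtain ⟨ψ1, o1, he1, ht1', ho1⟩ := (hR _ _ h1).1 _ _ _ ht1 σ hs1 hφ1
      obtain ⟨ψ2, o2, he2, ht2', ho2⟩ := (hR _ _ h2).1 _ _ _ ht2 σ hs2 hφ2
      obtain ⟨y1', rfl, hr⟩ := aoptr_some ho1
      cases aoptr_none ho2
      refine ⟨ψ1.conj ψ2, some y1', ?_, ATr.parCST ht1' ht2' hcm ?_ hne, Cl.base hr⟩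
      · rw [eval_conj, eval_conj, he1, he2]
      · exact notEqBot_of (σ := σ) (by rw [eval_conj, he1, he2, ← eval_conj]; exact hφ)
    | parCSS ht1 ht2 hcm hnp _ hn' =>
      obtain ⟨hφ1, hφ2⟩ := eval_conj_ne.mp hφ
      obtain ⟨ψ1, o1, he1, ht1', ho1⟩ := (hR _ _ h1).1 _ _ _ ht1 σ hs1 hφ1
      obtain ⟨ψ2, o2, he2, ht2', ho2⟩ := (hR _ _ h2).1 _ _ _ ht2 σ hs2 hφ2
      obtain ⟨y1', rfl, hr1⟩ := aoptr_some ho1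
      obtain ⟨y2', rfl, hr2⟩ := aoptr_some ho2
      refine ⟨ψ1.conj ψ2, some (.par y1' y2'), ?_, ATr.parCSS ht1' ht2' hcm ?_ hne
        (notEqBot_trans (FEquiv.conj2 (hsg _ _ hr1) (hsg _ _ hr2)) hn'), Cl.par hr1 hr2⟩
      · rw [eval_conj, eval_conj, he1, he2]
      · exact notEqBot_of (σ := σ) (by rw [eval_conj, he1, he2, ← eval_conj]; exact hφ)
  | @lm x1 y1 x2 y2 h1 h2 =>
    simp only [sigA] at hσ
    obtain ⟨hs1, hs2⟩ := eval_conj_ne.mp hσ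
    have hq1 := hsg _ _ h1
    have hq2 := hsg _ _ h2
    have hne : ¬ EqBot (sigA (APT.lm y1 y2)) := notEqBot_of (σ := σ) (by
      simp only [sigA]
      exact eval_conj_ne.mpr ⟨by rw [← hq1 σ]; exact hs1, by rw [← hq2 σ]; exact hs2⟩)
    cases htr with
    | lmT _ ht _ hn2 =>
      obtain ⟨ψ, o', he, ht', ho⟩ := (hR _ _ h1).1 _ _ _ ht σ hs1 hφ
      cases aoptr_none ho
      exact ⟨ψ, some y2, he, ATr.lmT y2 ht' hne (notEqBot_trans hq2 hn2), Cl.base h2⟩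
    | lmS _ ht _ hn =>
      obtain ⟨ψ, o', he, ht', ho⟩ := (hR _ _ h1).1 _ _ _ ht σ hs1 hφ
      obtain ⟨y1', rfl, hr⟩ := aoptr_some ho
      exact ⟨ψ, some (.par y1' y2), he,
        ATr.lmS y2 ht' hne (notEqBot_trans (FEquiv.conj2 (hsg _ _ hr) hq2) hn),
        Cl.par hr h2⟩
  | @cm x1 y1 x2 y2 h1 h2 =>
    simp only [sigA] at hσ
    obtain ⟨hs1, hs2⟩ := eval_conj_ne.mp hσ
    have hq1 := hsg _ _ h1
    have hq2 := hsg _ _ h2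
    have hne : ¬ EqBot (sigA (APT.cm y1 y2)) := notEqBot_of (σ := σ) (by
      simp only [sigA]
      exact eval_conj_ne.mpr ⟨by rw [← hq1 σ]; exact hs1, by rw [← hq2 σ]; exact hs2⟩)
    cases htr with
    | cmTT ht1 ht2 hcm hnp _ =>
      obtain ⟨hφ1, hφ2⟩ := eval_conj_ne.mp hφ
      obtain ⟨ψ1, o1, he1, ht1', ho1⟩ := (hR _ _ h1).1 _ _ _ ht1 σ hs1 hφ1
      obtain ⟨ψ2, o2, he2, ht2', ho2⟩ := (hR _ _ h2).1 _ _ _ ht2 σ hs2 hφ2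
      cases aoptr_none ho1
      cases aoptr_none ho2
      refine ⟨ψ1.conj ψ2, none, ?_, ATr.cmTT ht1' ht2' hcm ?_ hne, trivial⟩
      · rw [eval_conj, eval_conj, he1, he2]
      · exact notEqBot_of (σ := σ) (by rw [eval_conj, he1, he2, ← eval_conj]; exact hφ)
    | cmTS ht1 ht2 hcm hnp _ =>
      obtain ⟨hφ1, hφ2⟩ := eval_conj_ne.mp hφ
      obtain ⟨ψ1, o1, he1, ht1', ho1⟩ := (hR _ _ h1).1 _ _ _ ht1 σ hs1 hφ1
      obtain ⟨ψ2, o2, he2, ht2', ho2⟩ := (hR _ _ h2).1 _ _ _ ht2 σ hs2 hφ2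
      cases aoptr_none ho1
      obtain ⟨y2', rfl, hr⟩ := aoptr_some ho2
      refine ⟨ψ1.conj ψ2, some y2', ?_, ATr.cmTS ht1' ht2' hcm ?_ hne, Cl.base hr⟩
      · rw [eval_conj, eval_conj, he1, he2]
      · exact notEqBot_of (σ := σ) (by rw [eval_conj, he1, he2, ← eval_conj]; exact hφ)
    | cmST ht1 ht2 hcm hnp _ =>
      obtain ⟨hφ1, hφ2⟩ := eval_conj_ne.mp hφ
      obtain ⟨ψ1, o1, he1, ht1', ho1⟩ := (hR _ _ h1).1 _ _ _ ht1 σ hs1 hφ1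
      obtain ⟨ψ2, o2, he2, ht2', ho2⟩ := (hR _ _ h2).1 _ _ _ ht2 σ hs2 hφ2
      obtain ⟨y1', rfl, hr⟩ := aoptr_some ho1
      cases aoptr_none ho2
      refine ⟨ψ1.conj ψ2, some y1', ?_, ATr.cmST ht1' ht2' hcm ?_ hne, Cl.base hr⟩
      · rw [eval_conj, eval_conj, he1, he2]
      · exact notEqBot_of (σ := σ) (by rw [eval_conj, he1, he2, ← eval_conj]; exact hφ)
    | cmSS ht1 ht2 hcm hnp _ hn' =>
      obtain ⟨hφ1, hφ2⟩ := eval_conj_ne.mp hφ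
      obtain ⟨ψ1, o1, he1, ht1', ho1⟩ := (hR _ _ h1).1 _ _ _ ht1 σ hs1 hφ1
      obtain ⟨ψ2, o2, he2, ht2', ho2⟩ := (hR _ _ h2).1 _ _ _ ht2 σ hs2 hφ2
      obtain ⟨y1', rfl, hr1⟩ := aoptr_some ho1
      obtain ⟨y2', rfl, hr2⟩ := aoptr_some ho2
      refine ⟨ψ1.conj ψ2, some (.par y1' y2'), ?_, ATr.cmSS ht1' ht2' hcm ?_ hne
        (notEqBot_trans (FEquiv.conj2 (hsg _ _ hr1) (hsg _ _ hr2)) hn'), Cl.par hr1 hr2⟩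
      · rw [eval_conj, eval_conj, he1, he2]
      · exact notEqBot_of (σ := σ) (by rw [eval_conj, he1, he2, ← eval_conj]; exact hφ)
  | @encap K x1 y1 h1 =>
    simp only [sigA] at hσ
    cases htr with
    | encapR _ ht ha =>
      obtain ⟨ψ, o', he, ht', ho⟩ := (hR _ _ h1).1 _ _ _ ht σ hσ hφ
      exact ⟨ψ, o'.map (.encap K), he, ATr.encapR K ht' ha, AOptR_map_encap K ho⟩

end Forward

/-- Bisimulation equivalence is a congruence for the operators of ctACPps. -/
theorem ctACPps_congruence {α Act : Type} [Fintype α] [Fintype Act]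
    (γ : Option Act → Option Act → Option Act)
    (hγcomm : ∀ a b, γ a b = γ b a)
    (hγassoc : ∀ a b c, γ (γ a b) c = γ a (γ b c))
    (hγdelta : ∀ a, γ none a = none)
    (p q p' q' : APT α Act) (φ : Fml α) (H : Set Act)
    (h : ABisim γ p q) (h' : ABisim γ p' q') :
    ABisim γ (.alt p p') (.alt q q') ∧ ABisim γ (.seq p p') (.seq q q') ∧
    ABisim γ (.gc φ p) (.gc φ q) ∧ ABisim γ (.se φ p) (.se φ q) ∧
    ABisim γ (.par p p') (.par q q') ∧ ABisim γ (.lm p p') (.lm q q') ∧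
    ABisim γ (.cm p p') (.cm q q') ∧ ABisim γ (.encap H p) (.encap H q) := by
  obtain ⟨R, hRb, hpq⟩ := h
  obtain ⟨R', hRb', hpq'⟩ := h'
  let R0 : APT α Act → APT α Act → Prop := fun u v => R u v ∨ R' u v
  have hfwd : ∀ u v, R0 u v → ASim γ R0 u v := by
    rintro u v (hh | hh)
    · exact ASim_mono (fun a b => Or.inl) ((hRb u v hh).1)
    · exact ASim_mono (fun a b => Or.inr) ((hRb' u v hh).1)
  have hbwd : ∀ u v, (fun a b => R0 b a) u v → ASim γ (fun a b => R0 b a) u v := by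
    rintro u v (hh | hh)
    · exact ASim_mono (fun a b => Or.inl) ((hRb v u hh).2)
    · exact ASim_mono (fun a b => Or.inr) ((hRb' v u hh).2)
  have hT : AIsBisim γ (Cl R0) := by
    intro u v hc
    refine ⟨Cl_forward hfwd u v hc, ?_⟩
    exact ASim_mono (fun a b hh => Cl_swap hh)
      (Cl_forward hbwd v u (Cl_swap (R := fun a b => R0 b a) hc))
  exact ⟨⟨Cl R0, hT, Cl.alt (Or.inl hpq) (Or.inr hpq')⟩,
    ⟨Cl R0, hT, Cl.seq (Or.inl hpq) (Or.inr hpq')⟩,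
    ⟨Cl R0, hT, Cl.gc φ (Or.inl hpq)⟩,
    ⟨Cl R0, hT, Cl.se φ (Or.inl hpq)⟩,
    ⟨Cl R0, hT, Cl.par (Or.inl hpq) (Or.inr hpq')⟩,
    ⟨Cl R0, hT, Cl.lm (Or.inl hpq) (Or.inr hpq')⟩,
    ⟨Cl R0, hT, Cl.cm (Or.inl hpq) (Or.inr hpq')⟩,
    ⟨Cl R0, hT, Cl.encap H (Or.inl hpq)⟩⟩
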